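/- Let q be a finite-dimensional Lie algebra over an infinite field k, q = ⊕_{i=0}^{p} q_i a direct sum of subspaces with q_p ≠ 0, and φ_t ∈ GL(q) defined by φ_t(x) = t^i·x for x ∈ q_i. Assume φ is m-special for some integer m ≥ 1: there are bilinear maps B₀, B_m : q × q → q with B_m ≠ 0 such that φ_t^{-1}([φ_t(x), φ_t(y)]) = B₀(x,y) + t^m·B_m(x,y) for all t ∈ k^× and all x, y ∈ q. Then: (1) if [q_p, q_p] ≠ 0, then p ≤ m; (2) if in addition q_p is a Lie subalgebra of q and [q_p, q_p] ≠ 0, then p = m. -/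

import Mathlib

open Polynomial in
lemma poly_coeffs_zero {k : Type*} [Field k] [Infinite k] {L : Type*} [AddCommGroup L]
    [Module k L] (N : ℕ) (c : ℕ → L)
    (hc : ∀ t : kˣ, ∑ i ∈ Finset.range N, (t : k) ^ i • c i = 0) :
    ∀ i ∈ Finset.range N, c i = 0 := by
  intro i hi
  rw [← Module.forall_dual_apply_eq_zero_iff k]
  intro g
  set P : k[X] := ∑ j ∈ Finset.range N, C (g (c j)) * X ^ j with hP
  have hP0 : P = 0 := by
    apply P.eq_zero_of_infinite_isRoot
    apply Set.Infinite.mono (s := {x : k | x ≠ 0})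
    · intro x hx
      have hx' : x ≠ 0 := hx
      have h1 := hc (Units.mk0 x hx')
      simp only [Units.val_mk0] at h1
      have : g (∑ i ∈ Finset.range N, (x : k) ^ i • c i) = 0 := by
        rw [h1]; simp
      simp only [map_sum, map_smul, smul_eq_mul] at this
      simp only [Set.mem_setOf_eq, IsRoot, hP, eval_finset_sum, eval_mul, eval_C, eval_pow,
        eval_X]
      rw [← this]
      exact Finset.sum_congr rfl (fun j _ => mul_comm _ _)
    · exact (Set.finite_singleton (0 : k)).infinite_compl
  have : P.coeff i = g (c i) := by
    rw [hP, finset_sum_coeff]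
    simp only [coeff_C_mul, coeff_X_pow, mul_ite, mul_one, mul_zero]
    rw [Finset.sum_ite_eq (Finset.range N) i (fun j => g (c j))]
    simp [hi]
  rw [← this, hP0, coeff_zero]

/-- For an `m`-special one-parameter group `φ` coming from a decomposition
`q = ⊕_{i=0}^{p} q_i` with `q_p ≠ 0`: (1) if `[q_p, q_p] ≠ 0` then `p ≤ m`;
(2) if moreover `q_p` is a (non-abelian) Lie subalgebra, then `p = m`. -/
theorem m_special_top_degree
    {k : Type*} [Field k] [Infinite k] {L : Type*} [LieRing L] [LieAlgebra k L]
    [FiniteDimensional k L]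
    (p : ℕ) (Q : ℕ → Submodule k L)
    (hQbdd : ∀ i, p < i → Q i = ⊥) (hQp : Q p ≠ ⊥)
    (hdec : DirectSum.IsInternal Q)
    (φ : kˣ → (L ≃ₗ[k] L))
    (hφ : ∀ (t : kˣ) (i : ℕ), ∀ x ∈ Q i, φ t x = ((t : k) ^ i) • x)
    (m : ℕ) (hm : 1 ≤ m)
    (B₀ Bm : L →ₗ[k] L →ₗ[k] L) (hBm : Bm ≠ 0)
    (hspecial : ∀ (t : kˣ) (x y : L),
      (φ t).symm ⁅φ t x, φ t y⁆ = B₀ x y + ((t : k) ^ m) • Bm x y) :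
    ((∃ x ∈ Q p, ∃ y ∈ Q p, ⁅x, y⁆ ≠ 0) → p ≤ m) ∧
    ((∀ x ∈ Q p, ∀ y ∈ Q p, ⁅x, y⁆ ∈ Q p) →
      (∃ x ∈ Q p, ∃ y ∈ Q p, ⁅x, y⁆ ≠ 0) → p = m) := by
  classical
  letI := hdec.chooseDecomposition
  -- the support of any decomposition is contained in `range (p+1)`
  have hsupp : ∀ w : L, (DirectSum.decompose Q w).support ⊆ Finset.range (p + 1) := by
    intro w i hi
    rw [Finset.mem_range]
    by_contra h
    push_neg at h
    have hQi : Q i = ⊥ := hQbdd i (by omega)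
    have hmem : (DirectSum.decompose Q w i : L) = 0 :=
      (Submodule.eq_bot_iff _).mp hQi _ (SetLike.coe_mem _)
    exact (DFinsupp.mem_support_iff.mp hi) (Subtype.ext hmem)
  have hsum : ∀ w : L, ∑ i ∈ Finset.range (p + 1), (DirectSum.decompose Q w i : L) = w := by
    intro w
    conv_rhs => rw [← DirectSum.sum_support_decompose Q w]
    exact (Finset.sum_subset (hsupp w) (fun i _ hni => by
      rw [DFinsupp.notMem_support_iff.mp hni, ZeroMemClass.coe_zero])).symm
  -- projections as linear maps
  have hπ : ∀ j : ℕ, ∃ f : L →ₗ[k] L, ∀ w, f w = (DirectSum.decompose Q w j : L) := by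
    intro j
    refine ⟨⟨⟨fun w => (DirectSum.decompose Q w j : L), ?_⟩, ?_⟩, fun _ => rfl⟩
    · intro a b
      simp only [DirectSum.decompose_add, DirectSum.add_apply, Submodule.coe_add]
    · intro r a
      simp only [DirectSum.decompose_smul, DirectSum.smul_apply, RingHom.id_apply,
        SetLike.val_smul]
  -- `φ t` in terms of components
  have hφ' : ∀ (t : kˣ) (w : L),
      φ t w = ∑ i ∈ Finset.range (p + 1), (t : k) ^ i • (DirectSum.decompose Q w i : L) := by
    intro t w
    conv_lhs => rw [← hsum w]
    rw [map_sum]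
    exact Finset.sum_congr rfl fun i _ => hφ t i _ (SetLike.coe_mem _)
  -- key component computation
  have key : ∀ x ∈ Q p, ∀ y ∈ Q p, ∀ j, j ≤ p → 2 * p ≠ j → 2 * p ≠ m + j →
      (DirectSum.decompose Q ⁅x, y⁆ j : L) = 0 := by
    intro x hx y hy j hjp hj1 hj2
    obtain ⟨f, hf⟩ := hπ j
    set z := ⁅x, y⁆ with hz
    set bj : L := (DirectSum.decompose Q (B₀ x y) j : L) with hbj
    set dj : L := (DirectSum.decompose Q (Bm x y) j : L) with hdj
    have hcomp : ∀ (w : L) (i : ℕ),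
        f ((DirectSum.decompose Q w i : L)) =
          if i = j then (DirectSum.decompose Q w j : L) else 0 := by
      intro w i
      by_cases hij : i = j
      · subst hij
        rw [if_pos rfl, hf, DirectSum.decompose_of_mem_same Q (SetLike.coe_mem _)]
      · rw [if_neg hij, hf, DirectSum.decompose_of_mem_ne Q (SetLike.coe_mem _) hij]
    have main : ∀ t : kˣ, (t : k) ^ (2 * p) • (DirectSum.decompose Q z j : L)
        = (t : k) ^ j • bj + (t : k) ^ (m + j) • dj := by
      intro t
      have h1 : ⁅φ t x, φ t y⁆ = (t : k) ^ (2 * p) • z := by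
        rw [hφ t p x hx, hφ t p y hy, smul_lie, lie_smul, smul_smul, ← pow_add, two_mul]
      have h2 : ⁅φ t x, φ t y⁆ = φ t (B₀ x y) + (t : k) ^ m • φ t (Bm x y) := by
        have h := congrArg (φ t) (hspecial t x y)
        rwa [LinearEquiv.apply_symm_apply, map_add, map_smul] at h
      have h3 : (t : k) ^ (2 * p) • z
          = ∑ i ∈ Finset.range (p + 1), (t : k) ^ i • (DirectSum.decompose Q (B₀ x y) i : L)
            + (t : k) ^ m •
              ∑ i ∈ Finset.range (p + 1),
                (t : k) ^ i • (DirectSum.decompose Q (Bm x y) i : L) := by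
        rw [← h1, h2, hφ' t, hφ' t]
      have h4 := congrArg f h3
      rw [map_smul, map_add, map_smul, map_sum, map_sum] at h4
      simp only [map_smul, hcomp, smul_ite, smul_zero] at h4
      rw [Finset.sum_ite_eq' (Finset.range (p + 1)) j, Finset.sum_ite_eq' (Finset.range (p + 1)) j,
        if_pos (Finset.mem_range.mpr (by omega)), if_pos (Finset.mem_range.mpr (by omega)),
        hf, smul_smul, ← pow_add] at h4
      exact h4
    -- now use the polynomial lemma
    set N := 2 * p + m + 1 with hN
    set c : ℕ → L := fun i =>
      (if i = 2 * p then (DirectSum.decompose Q z j : L) else 0)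
        - (if i = j then bj else 0) - (if i = m + j then dj else 0) with hcdef
    have hc : ∀ t : kˣ, ∑ i ∈ Finset.range N, (t : k) ^ i • c i = 0 := by
      intro t
      simp only [hcdef, smul_sub, smul_ite, smul_zero, Finset.sum_sub_distrib]
      rw [Finset.sum_ite_eq' (Finset.range N) (2 * p), Finset.sum_ite_eq' (Finset.range N) j,
        Finset.sum_ite_eq' (Finset.range N) (m + j),
        if_pos (Finset.mem_range.mpr (by omega)), if_pos (Finset.mem_range.mpr (by omega)),
        if_pos (Finset.mem_range.mpr (by omega)), main t]
      abel
    have h0 := poly_coeffs_zero N c hc (2 * p) (Finset.mem_range.mpr (by omega))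
    simpa [hcdef, hj1, hj2] using h0
  constructor
  · -- part (1)
    rintro ⟨x, hx, y, hy, hxy⟩
    by_contra hpm
    push_neg at hpm
    apply hxy
    rw [← hsum ⁅x, y⁆]
    apply Finset.sum_eq_zero
    intro j hj
    rw [Finset.mem_range] at hj
    exact key x hx y hy j (by omega) (by omega) (by omega)
  · -- part (2)
    rintro hsub ⟨x, hx, y, hy, hxy⟩
    rcases Nat.eq_zero_or_pos p with hp0 | hp
    · -- then φ is trivial and Bm = 0, contradiction
      exfalso
      subst hp0
      have hQtop : Q 0 = ⊤ := by
        refine le_antisymm le_top ?_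
        rw [← hdec.submodule_iSup_eq_top]
        refine iSup_le fun i => ?_
        rcases Nat.eq_zero_or_pos i with hi0 | hi
        · subst hi0; exact le_rfl
        · rw [hQbdd i hi]; exact bot_le
      have hid : ∀ (t : kˣ) (w : L), φ t w = w := by
        intro t w
        have := hφ t 0 w (by rw [hQtop]; trivial)
        simpa using this
      apply hBm
      ext u v
      have hc : ∀ t : kˣ, ∑ i ∈ Finset.range (m + 1),
          (t : k) ^ i • ((if i = 0 then B₀ u v - ⁅u, v⁆ else 0)
            + (if i = m then Bm u v else 0)) = 0 := by
        intro t
        have hs := hspecial t u v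
        rw [hid t u, hid t v] at hs
        have h2 : (φ t).symm ⁅u, v⁆ = ⁅u, v⁆ := by
          rw [LinearEquiv.symm_apply_eq]
          exact (hid t _).symm
        rw [h2] at hs
        simp only [smul_add, smul_ite, smul_zero, Finset.sum_add_distrib]
        rw [Finset.sum_ite_eq' (Finset.range (m + 1)) 0, Finset.sum_ite_eq' (Finset.range (m + 1)) m,
          if_pos (Finset.mem_range.mpr (by omega)), if_pos (Finset.mem_range.mpr (by omega)),
          pow_zero, one_smul, hs]
        abel
      have h0 := poly_coeffs_zero (m + 1) _ hc m (Finset.mem_range.mpr (by omega))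
      have hm0 : m ≠ 0 := by omega
      simpa [hm0] using h0
    · -- p ≥ 1 : must have p = m
      by_contra hne
      have h1 : (DirectSum.decompose Q ⁅x, y⁆ p : L) = 0 :=
        key x hx y hy p le_rfl (by omega) (by omega)
      rw [DirectSum.decompose_of_mem_same Q (hsub x hx y hy)] at h1
      exact hxy h1
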